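/- Let p ≥ 1 be an integer and λ ∈ [0,1]. Consider the set S of coefficient pairs (a,b) satisfying a_{1,1} = 1, b_{1,1} = 0, a_{1,k} = b_{1,k} = 0 for 2 ≤ k ≤ p, and Σ_{k=1}^p Σ_{n=2}^∞ (2(k−1) + n(λn + 1 − λ))(|a_{n,k}| + |b_{n,k}|) ≤ 1 (the coefficient set of the class HS_p^0(λ)). Then for every n ≥ 2, every k ∈ {1,…,p}, and every complex c with |c| = 1/(2(k−1) + n(λn + 1 − λ)), the coefficient pair with a_{1,1} = 1 and a_{n,k} = c and all other coefficients zero is an extreme point of S; likewise the coefficient pair with a_{1,1} = 1 and b_{n,k} = c and all other coefficients zero is an extreme point of S. -/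

import Mathlib

open Complex Metric Set

/-- The coefficient set of the class `HS_p^0(λ)`: pairs `(a, b)` of coefficient arrays
(`x.1 n k = a_{n,k}`, `x.2 n k = b_{n,k}`, supported on `1 ≤ n`, `1 ≤ k ≤ p`) with
`a_{1,1} = 1`, `b_{1,1} = 0`, `a_{1,k} = b_{1,k} = 0` for `2 ≤ k ≤ p` and
`Σ_{k=1}^p Σ_{n=2}^∞ (2(k−1) + n(λn+1−λ))(|a_{n,k}| + |b_{n,k}|) ≤ 1`. -/
def ES (p : ℕ) (lam : ℝ) : Set ((ℕ → ℕ → ℂ) × (ℕ → ℕ → ℂ)) :=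
  {x | x.1 1 1 = 1 ∧ x.2 1 1 = 0 ∧
    (∀ k, 2 ≤ k → k ≤ p → x.1 1 k = 0 ∧ x.2 1 k = 0) ∧
    (∀ n k, n = 0 ∨ k = 0 ∨ p < k → x.1 n k = 0 ∧ x.2 n k = 0) ∧
    (∀ k ∈ Finset.Icc 1 p, Summable (fun n : ℕ =>
      if 2 ≤ n then (2 * ((k : ℝ) - 1) + n * (lam * n + 1 - lam)) *
        (‖x.1 n k‖ + ‖x.2 n k‖) else 0)) ∧
    ∑ k ∈ Finset.Icc 1 p, ∑' n : ℕ,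
      (if 2 ≤ n then (2 * ((k : ℝ) - 1) + n * (lam * n + 1 - lam)) *
        (‖x.1 n k‖ + ‖x.2 n k‖) else 0) ≤ 1}


lemma circle_ext {a b : ℝ} (ha : 0 < a) (hb : 0 < b) (hab : a + b = 1)
    {u v w : ℂ} (h : (a:ℂ) * u + (b:ℂ) * v = w)
    (hu : ‖u‖ ≤ ‖w‖) (hv : ‖v‖ ≤ ‖w‖) :
    u = w ∧ v = w := by
  rcases eq_or_ne w 0 with hw | hw
  · subst hw
    simp only [norm_zero] at hu hv
    have hu0 : u = 0 := by
      have := norm_nonneg u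
      have : ‖u‖ = 0 := le_antisymm hu this
      simpa using this
    have hv0 : v = 0 := by
      have := norm_nonneg v
      have : ‖v‖ = 0 := le_antisymm hv this
      simpa using this
    exact ⟨hu0, hv0⟩
  · set r := ‖w‖ with hr
    have hr0 : 0 < r := by
      have := norm_nonneg w
      rcases this.lt_or_eq with h' | h'
      · exact h'
      · exact absurd (by simpa using h'.symm) hw
    have hcc : (starRingEnd ℂ) w * w = ((r^2 : ℝ) : ℂ) := by
      rw [mul_comm, Complex.mul_conj, ← Complex.sq_norm]
    have claim : ∀ t : ℂ, ‖t‖ ≤ r → ((starRingEnd ℂ) w * t).re = r^2 →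
        (starRingEnd ℂ) w * t = ((r^2 : ℝ) : ℂ) := by
      intro t ht hre
      have habs : ‖(starRingEnd ℂ) w * t‖ ≤ r^2 := by
        rw [norm_mul, Complex.norm_conj]
        nlinarith
      have hnsq : Complex.normSq ((starRingEnd ℂ) w * t) ≤ (r^2)^2 := by
        rw [← Complex.sq_norm]
        nlinarith [norm_nonneg ((starRingEnd ℂ) w * t)]
      have him : ((starRingEnd ℂ) w * t).im = 0 := by
        have h1 := Complex.normSq_apply ((starRingEnd ℂ) w * t)
        nlinarith [sq_nonneg ((starRingEnd ℂ) w * t).im]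
      apply Complex.ext
      · simpa [← Complex.ofReal_pow] using hre
      · simpa [← Complex.ofReal_pow] using him
    have hsum : a * ((starRingEnd ℂ) w * u).re + b * ((starRingEnd ℂ) w * v).re = r^2 := by
      have : (starRingEnd ℂ) w * ((a:ℂ) * u + (b:ℂ) * v) = ((r^2:ℝ):ℂ) := by rw [h, hcc]
      have h2 := congrArg Complex.re this
      simp only [Complex.mul_re, Complex.add_re, Complex.add_im, Complex.mul_im,
        Complex.conj_re, Complex.conj_im, Complex.ofReal_re, Complex.ofReal_im,
        ← Complex.ofReal_pow] at h2 ⊢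
      linear_combination h2
    have hub : ((starRingEnd ℂ) w * u).re ≤ r^2 := by
      calc ((starRingEnd ℂ) w * u).re ≤ ‖(starRingEnd ℂ) w * u‖ := Complex.re_le_norm _
        _ ≤ r^2 := by rw [norm_mul, Complex.norm_conj]; nlinarith
    have hvb : ((starRingEnd ℂ) w * v).re ≤ r^2 := by
      calc ((starRingEnd ℂ) w * v).re ≤ ‖(starRingEnd ℂ) w * v‖ := Complex.re_le_norm _
        _ ≤ r^2 := by rw [norm_mul, Complex.norm_conj]; nlinarith
    have hue : ((starRingEnd ℂ) w * u).re = r^2 := by nlinarith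
    have hve : ((starRingEnd ℂ) w * v).re = r^2 := by nlinarith
    have hcw : (starRingEnd ℂ) w ≠ 0 := by simpa using hw
    constructor
    · have := (claim u hu hue).trans hcc.symm
      exact mul_left_cancel₀ hcw this
    · have := (claim v hv hve).trans hcc.symm
      exact mul_left_cancel₀ hcw this
open Complex

noncomputable def Wt (lam : ℝ) (m j : ℕ) : ℝ := 2 * ((j : ℝ) - 1) + m * (lam * m + 1 - lam)

noncomputable def Ft (lam : ℝ) (v : (ℕ → ℕ → ℂ) × (ℕ → ℕ → ℂ)) (j m : ℕ) : ℝ :=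
  if 2 ≤ m then Wt lam m j * (‖v.1 m j‖ + ‖v.2 m j‖) else 0

lemma mem_ES_iff {p : ℕ} {lam : ℝ} {x : (ℕ → ℕ → ℂ) × (ℕ → ℕ → ℂ)} :
    x ∈ ES p lam ↔ x.1 1 1 = 1 ∧ x.2 1 1 = 0 ∧
    (∀ k, 2 ≤ k → k ≤ p → x.1 1 k = 0 ∧ x.2 1 k = 0) ∧
    (∀ n k, n = 0 ∨ k = 0 ∨ p < k → x.1 n k = 0 ∧ x.2 n k = 0) ∧
    (∀ k ∈ Finset.Icc 1 p, Summable (Ft lam x k)) ∧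
    ∑ k ∈ Finset.Icc 1 p, ∑' n : ℕ, Ft lam x k n ≤ 1 := Iff.rfl

lemma Wt_pos {lam : ℝ} (hl : 0 ≤ lam) {m j : ℕ} (hm : 2 ≤ m) (hj : 1 ≤ j) :
    0 < Wt lam m j := by
  have hm' : (2 : ℝ) ≤ m := by exact_mod_cast hm
  have hj' : (1 : ℝ) ≤ j := by exact_mod_cast hj
  unfold Wt
  nlinarith [mul_nonneg (mul_nonneg hl (by linarith : (0:ℝ) ≤ (m:ℝ))) (by linarith : (0:ℝ) ≤ (m:ℝ) - 1)]

lemma Ft_nonneg {lam : ℝ} (hl : 0 ≤ lam) {j : ℕ} (hj : 1 ≤ j)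
    (v : (ℕ → ℕ → ℂ) × (ℕ → ℕ → ℂ)) (m : ℕ) : 0 ≤ Ft lam v j m := by
  unfold Ft
  split
  · exact mul_nonneg (Wt_pos hl ‹2 ≤ m› hj).le
      (add_nonneg (norm_nonneg _) (norm_nonneg _))
  · exact le_refl 0

lemma core (p : ℕ) (hp : 1 ≤ p) (lam : ℝ) (hlam : lam ∈ Set.Icc (0 : ℝ) 1)
    (n k : ℕ) (hn : 2 ≤ n) (hk1 : 1 ≤ k) (hkp : k ≤ p) (c : ℂ)
    (hc : ‖c‖ = 1 / (2 * ((k : ℝ) - 1) + n * (lam * n + 1 - lam)))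
    (x : (ℕ → ℕ → ℂ) × (ℕ → ℕ → ℂ))
    (h0 : ∀ j, x.1 0 j = 0 ∧ x.2 0 j = 0)
    (h1 : ∀ j, x.1 1 j = (if j = 1 then 1 else 0) ∧ x.2 1 j = 0)
    (hzero : ∀ m j, 2 ≤ m → ¬(m = n ∧ j = k) → x.1 m j = 0 ∧ x.2 m j = 0)
    (hone : (x.1 n k = c ∧ x.2 n k = 0) ∨ (x.1 n k = 0 ∧ x.2 n k = c)) :
    x ∈ Set.extremePoints ℝ (ES p lam) := by
  obtain ⟨hl0, hl1⟩ := hlam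
  have hkmem : k ∈ Finset.Icc 1 p := Finset.mem_Icc.mpr ⟨hk1, hkp⟩
  have hWnk : 0 < Wt lam n k := Wt_pos hl0 hn hk1
  have hc' : ‖c‖ = 1 / Wt lam n k := hc
  have habsc : Wt lam n k * ‖c‖ = 1 := by
    rw [hc']; field_simp
  have hsnk : ‖x.1 n k‖ + ‖x.2 n k‖ = ‖c‖ := by
    rcases hone with ⟨e1, e2⟩ | ⟨e1, e2⟩ <;> rw [e1, e2] <;> simp
  -- pointwise values of Ft x
  have hFx : ∀ j m, Ft lam x j m = if m = n ∧ j = k then 1 else 0 := by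
    intro j m
    by_cases hm : 2 ≤ m
    · by_cases hmj : m = n ∧ j = k
      · obtain ⟨rfl, rfl⟩ := hmj
        rw [if_pos ⟨rfl, rfl⟩]
        unfold Ft
        rw [if_pos hm, hsnk, habsc]
      · rw [if_neg hmj]
        obtain ⟨e1, e2⟩ := hzero m j hm hmj
        unfold Ft
        rw [if_pos hm, e1, e2]
        simp
    · unfold Ft
      rw [if_neg hm, if_neg (by rintro ⟨rfl, rfl⟩; exact hm hn)]
  have hFxsummable : ∀ j, Summable (Ft lam x j) := by
    intro j
    apply summable_of_ne_finset_zero (s := {n})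
    intro m hm
    rw [hFx]
    simp only [Finset.mem_singleton] at hm
    rw [if_neg (by rintro ⟨rfl, -⟩; exact hm rfl)]
  have hFxtsum : ∀ j, ∑' m, Ft lam x j m = if j = k then 1 else 0 := by
    intro j
    rw [tsum_eq_single n (fun m hm => by
      rw [hFx, if_neg (by rintro ⟨rfl, -⟩; exact hm rfl)])]
    rw [hFx]
    by_cases hj : j = k
    · rw [if_pos ⟨rfl, hj⟩, if_pos hj]
    · rw [if_neg (by rintro ⟨-, h⟩; exact hj h), if_neg hj]
  have hFxsum : ∑ j ∈ Finset.Icc 1 p, ∑' m, Ft lam x j m = 1 := by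
    rw [Finset.sum_congr rfl (fun j _ => hFxtsum j)]
    rw [Finset.sum_ite_eq' (Finset.Icc 1 p) k (fun _ => (1:ℝ))]
    rw [if_pos hkmem]
  have hxES : x ∈ ES p lam := by
    refine mem_ES_iff.mpr ⟨?_, (h1 1).2, ?_, ?_, fun j _ => hFxsummable j, le_of_eq hFxsum⟩
    · rw [(h1 1).1]; simp
    · intro j h2j hjp
      exact ⟨by rw [(h1 j).1, if_neg (by omega)], (h1 j).2⟩
    · intro m j hmj
      match m, hmj with
      | 0, _ => exact h0 j
      | m, Or.inr hj =>
        match m with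
        | 0 => exact h0 j
        | 1 => exact ⟨by rw [(h1 j).1, if_neg (by omega)], (h1 j).2⟩
        | (m+2) => exact hzero _ j (by omega) (by rintro ⟨-, rfl⟩; omega)
  refine ⟨hxES, ?_⟩
  rintro y hy z hz ⟨a, b, ha, hb, hab, heq⟩
  obtain ⟨hy11, hy12, hy1k, hyout, hySum, hyle⟩ := mem_ES_iff.mp hy
  obtain ⟨hz11, hz12, hz1k, hzout, hzSum, hzle⟩ := mem_ES_iff.mp hz
  obtain ⟨hx11, hx12, hx1k, hxout, -, -⟩ := mem_ES_iff.mp hxES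
  have heq1 : ∀ m j, (a : ℂ) * y.1 m j + (b : ℂ) * z.1 m j = x.1 m j := by
    intro m j
    have h := congrFun (congrFun (congrArg Prod.fst heq) m) j
    simpa [Complex.real_smul] using h
  have heq2 : ∀ m j, (a : ℂ) * y.2 m j + (b : ℂ) * z.2 m j = x.2 m j := by
    intro m j
    have h := congrFun (congrFun (congrArg Prod.snd heq) m) j
    simpa [Complex.real_smul] using h
  -- pointwise domination
  have habs_comb : ∀ (u v w : ℂ), (a:ℂ) * u + (b:ℂ) * v = w →
      ‖w‖ ≤ a * ‖u‖ + b * ‖v‖ := by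
    intro u v w hw
    calc ‖w‖ = ‖(a:ℂ) * u + (b:ℂ) * v‖ := by rw [hw]
      _ ≤ ‖(a:ℂ) * u‖ + ‖(b:ℂ) * v‖ := norm_add_le _ _
      _ = a * ‖u‖ + b * ‖v‖ := by
          rw [norm_mul, norm_mul, Complex.norm_real, Complex.norm_real, Real.norm_eq_abs,
            Real.norm_eq_abs, abs_of_pos ha, abs_of_pos hb]
  have hDle : ∀ j, 1 ≤ j → ∀ m, Ft lam x j m ≤ a * Ft lam y j m + b * Ft lam z j m := by
    intro j hj m
    by_cases hm : 2 ≤ m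
    · have hW : 0 < Wt lam m j := Wt_pos hl0 hm hj
      have t1 := habs_comb _ _ _ (heq1 m j)
      have t2 := habs_comb _ _ _ (heq2 m j)
      unfold Ft
      rw [if_pos hm, if_pos hm, if_pos hm]
      nlinarith [mul_le_mul_of_nonneg_left (add_le_add t1 t2) hW.le]
    · unfold Ft
      rw [if_neg hm, if_neg hm, if_neg hm]
      simp
  have hgSum : ∀ j ∈ Finset.Icc 1 p,
      Summable (fun m => a * Ft lam y j m + b * Ft lam z j m) :=
    fun j hj => ((hySum j hj).mul_left a).add ((hzSum j hj).mul_left b)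
  have hgts : ∀ j ∈ Finset.Icc 1 p, ∑' m, (a * Ft lam y j m + b * Ft lam z j m)
      = a * (∑' m, Ft lam y j m) + b * (∑' m, Ft lam z j m) := by
    intro j hj
    rw [Summable.tsum_add ((hySum j hj).mul_left a) ((hzSum j hj).mul_left b),
      tsum_mul_left, tsum_mul_left]
  have hgsum_le : ∑ j ∈ Finset.Icc 1 p, ∑' m, (a * Ft lam y j m + b * Ft lam z j m) ≤ 1 := by
    rw [Finset.sum_congr rfl hgts, Finset.sum_add_distrib, ← Finset.mul_sum, ← Finset.mul_sum]
    nlinarith [hyle, hzle]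
  have hts_le : ∀ j ∈ Finset.Icc 1 p, ∑' m, Ft lam x j m
      ≤ ∑' m, (a * Ft lam y j m + b * Ft lam z j m) := by
    intro j hj
    have hj1 : 1 ≤ j := (Finset.mem_Icc.mp hj).1
    exact Summable.tsum_le_tsum (hDle j hj1) (hFxsummable j) (hgSum j hj)
  -- termwise equality
  have hkey0 : ∀ j ∈ Finset.Icc 1 p, ∀ m,
      a * Ft lam y j m + b * Ft lam z j m = Ft lam x j m := by
    have hdiff0 : ∑ j ∈ Finset.Icc 1 p,
        ((∑' m, (a * Ft lam y j m + b * Ft lam z j m)) - ∑' m, Ft lam x j m) = 0 := by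
      rw [Finset.sum_sub_distrib]
      have h1 := hgsum_le
      have h2 := hFxsum
      have h3 : ∑ j ∈ Finset.Icc 1 p, ∑' m, Ft lam x j m
          ≤ ∑ j ∈ Finset.Icc 1 p, ∑' m, (a * Ft lam y j m + b * Ft lam z j m) :=
        Finset.sum_le_sum hts_le
      linarith
    have hterm : ∀ j ∈ Finset.Icc 1 p,
        (∑' m, (a * Ft lam y j m + b * Ft lam z j m)) - (∑' m, Ft lam x j m) = 0 := by
      intro j hj
      have := (Finset.sum_eq_zero_iff_of_nonneg
        (fun j hj => sub_nonneg.mpr (hts_le j hj))).mp hdiff0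
      exact this j hj
    intro j hj m
    have hj1 : 1 ≤ j := (Finset.mem_Icc.mp hj).1
    have hsub : Summable (fun m => (a * Ft lam y j m + b * Ft lam z j m) - Ft lam x j m) :=
      (hgSum j hj).sub (hFxsummable j)
    have hts0 : ∑' m, ((a * Ft lam y j m + b * Ft lam z j m) - Ft lam x j m) = 0 := by
      rw [Summable.tsum_sub (hgSum j hj) (hFxsummable j)]
      exact hterm j hj
    have hle := Summable.le_tsum hsub m (fun m' _ => sub_nonneg.mpr (hDle j hj1 m'))
    have hge := sub_nonneg.mpr (hDle j hj1 m)
    rw [hts0] at hle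
    linarith
  -- modulus bound at (n,k)
  have hbound : ∀ v : (ℕ → ℕ → ℂ) × (ℕ → ℕ → ℂ),
      (∀ j ∈ Finset.Icc 1 p, Summable (Ft lam v j)) →
      (∑ j ∈ Finset.Icc 1 p, ∑' m, Ft lam v j m ≤ 1) →
      ‖v.1 n k‖ ≤ ‖c‖ ∧ ‖v.2 n k‖ ≤ ‖c‖ := by
    intro v hvSum hvle
    have h1 : Ft lam v k n ≤ ∑' m, Ft lam v k m :=
      Summable.le_tsum (hvSum k hkmem) n (fun m _ => Ft_nonneg hl0 hk1 v m)
    have h2 : ∑' m, Ft lam v k m ≤ ∑ j ∈ Finset.Icc 1 p, ∑' m, Ft lam v j m :=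
      Finset.single_le_sum (fun j hj => tsum_nonneg
        (fun m => Ft_nonneg hl0 (Finset.mem_Icc.mp hj).1 v m)) hkmem
    have h3 : Ft lam v k n ≤ 1 := le_trans h1 (le_trans h2 hvle)
    unfold Ft at h3
    rw [if_pos hn] at h3
    constructor
    · nlinarith [norm_nonneg (v.1 n k), norm_nonneg (v.2 n k), hWnk, habsc]
    · nlinarith [norm_nonneg (v.1 n k), norm_nonneg (v.2 n k), hWnk, habsc]
  obtain ⟨hy1b, hy2b⟩ := hbound y hySum hyle
  obtain ⟨hz1b, hz2b⟩ := hbound z hzSum hzle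
  -- equality at (n,k)
  have hDnk := hkey0 k hkmem n
  rw [hFx, if_pos ⟨rfl, rfl⟩] at hDnk
  have hFy : Ft lam y k n = Wt lam n k * (‖y.1 n k‖ + ‖y.2 n k‖) := by
    unfold Ft; rw [if_pos hn]
  have hFz : Ft lam z k n = Wt lam n k * (‖z.1 n k‖ + ‖z.2 n k‖) := by
    unfold Ft; rw [if_pos hn]
  rw [hFy, hFz] at hDnk
  have hnk : (y.1 n k = x.1 n k ∧ y.2 n k = x.2 n k) ∧
      (z.1 n k = x.1 n k ∧ z.2 n k = x.2 n k) := by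
    rcases hone with ⟨e1, e2⟩ | ⟨e1, e2⟩
    · have hc1 : (a:ℂ) * y.1 n k + (b:ℂ) * z.1 n k = c := by rw [heq1 n k, e1]
      obtain ⟨hyc, hzc⟩ := circle_ext ha hb hab hc1 hy1b hz1b
      rw [hyc, hzc] at hDnk
      have h4 : a * (Wt lam n k * ‖y.2 n k‖)
          + b * (Wt lam n k * ‖z.2 n k‖) = 0 := by
        linear_combination hDnk - a * habsc - b * habsc - hab
      have t1 : 0 ≤ a * (Wt lam n k * ‖y.2 n k‖) :=
        mul_nonneg ha.le (mul_nonneg hWnk.le (norm_nonneg _))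
      have t2 : 0 ≤ b * (Wt lam n k * ‖z.2 n k‖) :=
        mul_nonneg hb.le (mul_nonneg hWnk.le (norm_nonneg _))
      have hy20 : y.2 n k = 0 := by
        have e0 : a * (Wt lam n k * ‖y.2 n k‖) = 0 := by linarith
        rcases mul_eq_zero.mp e0 with h' | h'
        · exact absurd h' ha.ne'
        rcases mul_eq_zero.mp h' with h'' | h''
        · exact absurd h'' hWnk.ne'
        · simpa using h''
      have hz20 : z.2 n k = 0 := by
        have e0 : b * (Wt lam n k * ‖z.2 n k‖) = 0 := by linarith
        rcases mul_eq_zero.mp e0 with h' | h'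
        · exact absurd h' hb.ne'
        rcases mul_eq_zero.mp h' with h'' | h''
        · exact absurd h'' hWnk.ne'
        · simpa using h''
      rw [e1, e2]
      exact ⟨⟨hyc, hy20⟩, ⟨hzc, hz20⟩⟩
    · have hc2 : (a:ℂ) * y.2 n k + (b:ℂ) * z.2 n k = c := by rw [heq2 n k, e2]
      obtain ⟨hyc, hzc⟩ := circle_ext ha hb hab hc2 hy2b hz2b
      rw [hyc, hzc] at hDnk
      have h4 : a * (Wt lam n k * ‖y.1 n k‖)
          + b * (Wt lam n k * ‖z.1 n k‖) = 0 := by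
        linear_combination hDnk - a * habsc - b * habsc - hab
      have t1 : 0 ≤ a * (Wt lam n k * ‖y.1 n k‖) :=
        mul_nonneg ha.le (mul_nonneg hWnk.le (norm_nonneg _))
      have t2 : 0 ≤ b * (Wt lam n k * ‖z.1 n k‖) :=
        mul_nonneg hb.le (mul_nonneg hWnk.le (norm_nonneg _))
      have hy10 : y.1 n k = 0 := by
        have e0 : a * (Wt lam n k * ‖y.1 n k‖) = 0 := by linarith
        rcases mul_eq_zero.mp e0 with h' | h'
        · exact absurd h' ha.ne'
        rcases mul_eq_zero.mp h' with h'' | h''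
        · exact absurd h'' hWnk.ne'
        · simpa using h''
      have hz10 : z.1 n k = 0 := by
        have e0 : b * (Wt lam n k * ‖z.1 n k‖) = 0 := by linarith
        rcases mul_eq_zero.mp e0 with h' | h'
        · exact absurd h' hb.ne'
        rcases mul_eq_zero.mp h' with h'' | h''
        · exact absurd h'' hWnk.ne'
        · simpa using h''
      rw [e1, e2]
      exact ⟨⟨hy10, hyc⟩, ⟨hz10, hzc⟩⟩
  -- vanishing elsewhere
  have hvanish : ∀ m j, 2 ≤ m → 1 ≤ j → j ≤ p → ¬(m = n ∧ j = k) →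
      (y.1 m j = 0 ∧ y.2 m j = 0) ∧ (z.1 m j = 0 ∧ z.2 m j = 0) := by
    intro m j hm hj1 hjp hmj
    have hjmem : j ∈ Finset.Icc 1 p := Finset.mem_Icc.mpr ⟨hj1, hjp⟩
    have h := hkey0 j hjmem m
    rw [hFx, if_neg hmj] at h
    have hWp : 0 < Wt lam m j := Wt_pos hl0 hm hj1
    have n1 : 0 ≤ a * Ft lam y j m := mul_nonneg ha.le (Ft_nonneg hl0 hj1 y m)
    have n2 : 0 ≤ b * Ft lam z j m := mul_nonneg hb.le (Ft_nonneg hl0 hj1 z m)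
    have e1 : a * Ft lam y j m = 0 := by linarith
    have e2 : b * Ft lam z j m = 0 := by linarith
    have hFy0 : Ft lam y j m = 0 := by
      rcases mul_eq_zero.mp e1 with h' | h'
      · exact absurd h' ha.ne'
      · exact h'
    have hFz0 : Ft lam z j m = 0 := by
      rcases mul_eq_zero.mp e2 with h' | h'
      · exact absurd h' hb.ne'
      · exact h'
    unfold Ft at hFy0 hFz0
    rw [if_pos hm] at hFy0 hFz0
    have hsy : ‖y.1 m j‖ + ‖y.2 m j‖ = 0 := by
      rcases mul_eq_zero.mp hFy0 with h' | h'
      · exact absurd h' hWp.ne'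
      · exact h'
    have hsz : ‖z.1 m j‖ + ‖z.2 m j‖ = 0 := by
      rcases mul_eq_zero.mp hFz0 with h' | h'
      · exact absurd h' hWp.ne'
      · exact h'
    have ay1 := norm_nonneg (y.1 m j)
    have ay2 := norm_nonneg (y.2 m j)
    have az1 := norm_nonneg (z.1 m j)
    have az2 := norm_nonneg (z.2 m j)
    refine ⟨⟨?_, ?_⟩, ?_, ?_⟩ <;>
      rw [← norm_eq_zero] <;> linarith
  -- assemble
  have build : ∀ v : (ℕ → ℕ → ℂ) × (ℕ → ℕ → ℂ), v.1 1 1 = 1 → v.2 1 1 = 0 →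
      (∀ j, 2 ≤ j → j ≤ p → v.1 1 j = 0 ∧ v.2 1 j = 0) →
      (∀ m j, m = 0 ∨ j = 0 ∨ p < j → v.1 m j = 0 ∧ v.2 m j = 0) →
      (∀ m j, 2 ≤ m → 1 ≤ j → j ≤ p → ¬(m = n ∧ j = k) → v.1 m j = 0 ∧ v.2 m j = 0) →
      (v.1 n k = x.1 n k ∧ v.2 n k = x.2 n k) → v = x := by
    intro v v11 v12 v1k vout vvan vnk
    have hpt : ∀ m j, v.1 m j = x.1 m j ∧ v.2 m j = x.2 m j := by
      intro m j
      rcases Nat.eq_zero_or_pos j with rfl | hj1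
      · obtain ⟨a1, a2⟩ := vout m 0 (Or.inr (Or.inl rfl))
        obtain ⟨b1, b2⟩ := hxout m 0 (Or.inr (Or.inl rfl))
        exact ⟨a1.trans b1.symm, a2.trans b2.symm⟩
      rcases Nat.lt_or_ge p j with hpj | hjp
      · obtain ⟨a1, a2⟩ := vout m j (Or.inr (Or.inr hpj))
        obtain ⟨b1, b2⟩ := hxout m j (Or.inr (Or.inr hpj))
        exact ⟨a1.trans b1.symm, a2.trans b2.symm⟩
      rcases Nat.lt_or_ge m 2 with hm | hm
      · interval_cases m
        · obtain ⟨a1, a2⟩ := vout 0 j (Or.inl rfl)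
          obtain ⟨b1, b2⟩ := hxout 0 j (Or.inl rfl)
          exact ⟨a1.trans b1.symm, a2.trans b2.symm⟩
        · rcases Nat.lt_or_ge j 2 with hj2 | hj2
          · have hj : j = 1 := by omega
            subst hj
            exact ⟨v11.trans hx11.symm, v12.trans hx12.symm⟩
          · obtain ⟨a1, a2⟩ := v1k j hj2 hjp
            obtain ⟨b1, b2⟩ := hx1k j hj2 hjp
            exact ⟨a1.trans b1.symm, a2.trans b2.symm⟩
      by_cases hmj : m = n ∧ j = k
      · obtain ⟨rfl, rfl⟩ := hmj
        exact vnk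
      · obtain ⟨a1, a2⟩ := vvan m j hm hj1 hjp hmj
        obtain ⟨b1, b2⟩ := hzero m j hm hmj
        exact ⟨a1.trans b1.symm, a2.trans b2.symm⟩
    exact Prod.ext (funext fun m => funext fun j => (hpt m j).1)
      (funext fun m => funext fun j => (hpt m j).2)
  refine (?_ : y = x ∧ z = x).1
  constructor
  · exact build y hy11 hy12 hy1k hyout
      (fun m j hm hj1 hjp hmj => (hvanish m j hm hj1 hjp hmj).1) hnk.1
  · exact build z hz11 hz12 hz1k hzout
      (fun m j hm hj1 hjp hmj => (hvanish m j hm hj1 hjp hmj).2) hnk.2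

/-- Each coefficient pair with `a_{1,1} = 1` and a single further nonzero coefficient
`a_{n,k}` (resp. `b_{n,k}`), `n ≥ 2`, `1 ≤ k ≤ p`, of modulus
`1/(2(k−1) + n(λn+1−λ))`, is an extreme point of the coefficient set of `HS_p^0(λ)`. -/
theorem single_coefficient_maps_are_extreme
    (p : ℕ) (hp : 1 ≤ p) (lam : ℝ) (hlam : lam ∈ Set.Icc (0 : ℝ) 1)
    (n k : ℕ) (hn : 2 ≤ n) (hk1 : 1 ≤ k) (hkp : k ≤ p) (c : ℂ)
    (hc : ‖c‖ = 1 / (2 * ((k : ℝ) - 1) + n * (lam * n + 1 - lam))) :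
    ((fun m j => if m = 1 ∧ j = 1 then (1 : ℂ) else if m = n ∧ j = k then c else 0,
        fun _ _ => (0 : ℂ)) : (ℕ → ℕ → ℂ) × (ℕ → ℕ → ℂ))
      ∈ Set.extremePoints ℝ (ES p lam) ∧
    ((fun m j => if m = 1 ∧ j = 1 then (1 : ℂ) else 0,
        fun m j => if m = n ∧ j = k then c else 0) : (ℕ → ℕ → ℂ) × (ℕ → ℕ → ℂ))
      ∈ Set.extremePoints ℝ (ES p lam) := by
  obtain ⟨hl0, hl1⟩ := hlam
  constructor
  · apply core p hp lam ⟨hl0, hl1⟩ n k hn hk1 hkp c hc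
    · intro j
      refine ⟨?_, rfl⟩
      show (if 0 = 1 ∧ j = 1 then (1:ℂ) else if 0 = n ∧ j = k then c else 0) = 0
      rw [if_neg (by rintro ⟨h, -⟩; omega), if_neg (by rintro ⟨h, -⟩; omega)]
    · intro j
      refine ⟨?_, rfl⟩
      show (if 1 = 1 ∧ j = 1 then (1:ℂ) else if 1 = n ∧ j = k then c else 0)
        = if j = 1 then 1 else 0
      by_cases hj : j = 1
      · rw [if_pos ⟨rfl, hj⟩, if_pos hj]
      · rw [if_neg (by rintro ⟨-, h⟩; exact hj h),
          if_neg (by rintro ⟨h, -⟩; omega), if_neg hj]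
    · intro m j hm hmj
      refine ⟨?_, rfl⟩
      show (if m = 1 ∧ j = 1 then (1:ℂ) else if m = n ∧ j = k then c else 0) = 0
      rw [if_neg (by rintro ⟨h, -⟩; omega), if_neg hmj]
    · refine Or.inl ⟨?_, rfl⟩
      show (if n = 1 ∧ k = 1 then (1:ℂ) else if n = n ∧ k = k then c else 0) = c
      rw [if_neg (by rintro ⟨h, -⟩; omega), if_pos ⟨rfl, rfl⟩]
  · apply core p hp lam ⟨hl0, hl1⟩ n k hn hk1 hkp c hc
    · intro j
      constructor
      · show (if 0 = 1 ∧ j = 1 then (1:ℂ) else 0) = 0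
        rw [if_neg (by rintro ⟨h, -⟩; omega)]
      · show (if 0 = n ∧ j = k then c else 0) = 0
        rw [if_neg (by rintro ⟨h, -⟩; omega)]
    · intro j
      constructor
      · show (if 1 = 1 ∧ j = 1 then (1:ℂ) else 0) = if j = 1 then 1 else 0
        by_cases hj : j = 1
        · rw [if_pos ⟨rfl, hj⟩, if_pos hj]
        · rw [if_neg (by rintro ⟨-, h⟩; exact hj h), if_neg hj]
      · show (if 1 = n ∧ j = k then c else 0) = 0
        rw [if_neg (by rintro ⟨h, -⟩; omega)]
    · intro m j hm hmj
      constructor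
      · show (if m = 1 ∧ j = 1 then (1:ℂ) else 0) = 0
        rw [if_neg (by rintro ⟨h, -⟩; omega)]
      · show (if m = n ∧ j = k then c else 0) = 0
        rw [if_neg hmj]
    · refine Or.inr ⟨?_, ?_⟩
      · show (if n = 1 ∧ k = 1 then (1:ℂ) else 0) = 0
        rw [if_neg (by rintro ⟨h, -⟩; omega)]
      · show (if n = n ∧ k = k then c else 0) = c
        rw [if_pos ⟨rfl, rfl⟩]
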